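/- For $x \in (0,1)$ and $s \in (1/2,1)$, $\int_{-1}^1 \frac{(1-xt)^{2s-3}}{(1-t^2)^s}\,dt = \frac{2^{1-2s}\,\Gamma(1-s)^2}{\Gamma(2-2s)}\,(1-x^2)^{s-2}$. -/

import Mathlib

open Real MeasureTheory intervalIntegral

lemma betaIntegrable {a b : ℝ} (ha : 0 < a) (hb : 0 < b) :
    IntegrableOn (fun u : ℝ => u^(a-1) * (1-u)^(b-1)) (Set.Ioo 0 1) := by
  have h := (Complex.betaIntegral_convergent (u := (a:ℂ)) (v := (b:ℂ)) (by simpa) (by simpa)).1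
  have h2 : IntegrableOn (fun u : ℝ =>
      ((fun y : ℝ => (y:ℂ) ^ ((a:ℂ)-1) * (1-(y:ℂ)) ^ ((b:ℂ)-1)) u).re) (Set.Ioc 0 1) := h.re
  refine (h2.mono_set Set.Ioo_subset_Ioc_self).congr_fun ?_ measurableSet_Ioo
  intro u hu
  have h0 : (0:ℝ) ≤ u := le_of_lt hu.1
  have h1 : (0:ℝ) ≤ 1 - u := by linarith [hu.2]
  simp only [← Complex.ofReal_cpow h0, ← Complex.ofReal_cpow h1, ← Complex.ofReal_one,
    ← Complex.ofReal_sub, ← Complex.ofReal_mul, Complex.ofReal_re]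

lemma betaEval {a b : ℝ} (ha : 0 < a) (hb : 0 < b) :
    ∫ u in Set.Ioo (0:ℝ) 1, u^(a-1) * (1-u)^(b-1)
      = Gamma a * Gamma b / Gamma (a+b) := by
  have key := Complex.Gamma_mul_Gamma_eq_betaIntegral (s := (a:ℂ)) (t := (b:ℂ))
    (by simpa) (by simpa)
  have hβ : Complex.betaIntegral a b
      = ((∫ u in Set.Ioo (0:ℝ) 1, u^(a-1) * (1-u)^(b-1) : ℝ) : ℂ) := by
    rw [Complex.betaIntegral, intervalIntegral.integral_of_le zero_le_one,
      MeasureTheory.integral_Ioc_eq_integral_Ioo]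
    have step1 : ∫ t in Set.Ioo (0:ℝ) 1, (t:ℂ) ^ ((a:ℂ)-1) * (1-(t:ℂ)) ^ ((b:ℂ)-1)
        = ∫ t in Set.Ioo (0:ℝ) 1, ((t^(a-1) * (1-t)^(b-1) : ℝ) : ℂ) := by
      refine setIntegral_congr_fun measurableSet_Ioo (fun u hu => ?_)
      have h0 : (0:ℝ) ≤ u := le_of_lt hu.1
      have h1 : (0:ℝ) ≤ 1 - u := by linarith [hu.2.le]
      simp only [← Complex.ofReal_cpow h0, ← Complex.ofReal_cpow h1, ← Complex.ofReal_one,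
        ← Complex.ofReal_sub, ← Complex.ofReal_mul]
    rw [step1]
    exact _root_.integral_ofReal
  rw [hβ, ← Complex.ofReal_add, Complex.Gamma_ofReal, Complex.Gamma_ofReal,
    Complex.Gamma_ofReal, ← Complex.ofReal_mul, ← Complex.ofReal_mul] at key
  have hre := Complex.ofReal_inj.mp key
  have hΓ : Gamma (a+b) ≠ 0 := (Gamma_pos_of_pos (by linarith)).ne'
  field_simp
  linarith [hre]

lemma keyalg {N D u v s : ℝ} (hN : 0 < N) (hD : 0 < D) (hu : 0 < u) (hv : 0 < v) :
    2*N/D^2 * ((N/D)^(2*s-3) / ((4*u*v*N)/D^2)^s)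
      = 2^(1-2*s) * N^(s-2) * (u^(-s) * (v^(-s) * D)) := by
  apply Real.log_injOn_pos (Set.mem_Ioi.mpr (by positivity)) (Set.mem_Ioi.mpr (by positivity))
  simp (disch := positivity) only [Real.log_mul, Real.log_div, Real.log_rpow, Real.log_pow,
    show (4:ℝ) = 2^(2:ℕ) from by norm_num]
  push_cast
  ring

theorem stmt8 (x s : ℝ) (hx : x ∈ Set.Ioo (0:ℝ) 1) (hs : s ∈ Set.Ioo (1/2 : ℝ) 1) :
    ∫ t in (-1:ℝ)..1, (1 - x*t) ^ (2*s - 3) / (1 - t^2) ^ s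
      = 2 ^ (1 - 2*s) * Real.Gamma (1 - s) ^ 2 / Real.Gamma (2 - 2*s)
        * (1 - x^2) ^ (s - 2) := by
  obtain ⟨hx0, hx1⟩ := hx
  obtain ⟨hs0, hs1⟩ := hs
  have hA : 0 < 1 - x^2 := by nlinarith
  set φ : ℝ → ℝ := fun u => (2*u - (1-x)) / (2*x*u + (1-x)) with hφ
  have hD : ∀ u ∈ Set.Ioo (0:ℝ) 1, 0 < 2*x*u + (1-x) := by
    intro u hu; nlinarith [hu.1, hu.2]
  -- derivative
  have hderiv : ∀ u ∈ Set.Ioo (0:ℝ) 1,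
      HasDerivWithinAt φ ((fun u => 2*(1-x^2)/(2*x*u+(1-x))^2) u) (Set.Ioo 0 1) u := by
    intro u hu
    have hDu := hD u hu
    have h1 : HasDerivAt (fun u : ℝ => 2*u - (1-x)) 2 u := by
      simpa using ((hasDerivAt_id u).const_mul (2:ℝ)).sub_const (1-x)
    have h2 : HasDerivAt (fun u : ℝ => 2*x*u + (1-x)) (2*x) u := by
      simpa using ((hasDerivAt_id u).const_mul (2*x)).add_const (1-x)
    have h := h1.div h2 hDu.ne'
    have : HasDerivAt φ ((2*(2*x*u+(1-x)) - (2*u-(1-x))*(2*x)) / (2*x*u+(1-x))^2) u := h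
    refine this.hasDerivWithinAt.congr_deriv ?_
    beta_reduce
    ring
  -- injectivity
  have hinj : Set.InjOn φ (Set.Ioo 0 1) := by
    intro u1 h1 u2 h2 heq
    have d1 := (hD u1 h1).ne'
    have d2 := (hD u2 h2).ne'
    rw [hφ] at heq
    simp only [div_eq_div_iff d1 d2] at heq
    have hz : (2*(1-x^2))*(u1-u2) = 0 := by linear_combination heq
    rcases mul_eq_zero.mp hz with h | h
    · nlinarith
    · linarith
  -- image
  have himg : φ '' Set.Ioo 0 1 = Set.Ioo (-1:ℝ) 1 := by
    ext t
    constructor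
    · rintro ⟨u, hu, rfl⟩
      have hDu := hD u hu
      have e1 : φ u + 1 = (2*u*(1+x))/(2*x*u+(1-x)) := by
        rw [hφ]; beta_reduce; rw [div_add_one hDu.ne']; ring
      have e2 : 1 - φ u = (2*(1-x)*(1-u))/(2*x*u+(1-x)) := by
        rw [hφ]; beta_reduce; rw [one_sub_div hDu.ne']; ring
      have p1 : 0 < φ u + 1 := e1 ▸ div_pos (by nlinarith [hu.1]) hDu
      have p2 : 0 < 1 - φ u := e2 ▸ div_pos (by nlinarith [hu.2]) hDu
      exact ⟨by linarith, by linarith⟩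
    · rintro ⟨ht1, ht2⟩
      have hxt : 0 < 1 - x*t := by nlinarith
      refine ⟨(1-x)*(1+t)/(2*(1-x*t)), ⟨?_, ?_⟩, ?_⟩
      · exact div_pos (by nlinarith) (by linarith)
      · rw [div_lt_one (by linarith)]; nlinarith
      · rw [hφ]
        have hden : 2*x*((1-x)*(1+t)/(2*(1-x*t))) + (1-x) ≠ 0 := by
          have hpos : (0:ℝ) < 2*x*((1-x)*(1+t)/(2*(1-x*t))) + (1-x) := by
            have hq := div_pos (show (0:ℝ) < (1-x)*(1+t) by nlinarith)
              (show (0:ℝ) < 2*(1-x*t) by linarith)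
            nlinarith [hq]
          exact hpos.ne'
        rw [div_eq_iff hden]
        field_simp
        ring
  -- change of variables
  rw [intervalIntegral.integral_of_le (by norm_num), MeasureTheory.integral_Ioc_eq_integral_Ioo,
    ← himg, integral_image_eq_integral_abs_deriv_smul measurableSet_Ioo hderiv hinj]
  -- pointwise computation
  have hpt : ∀ u ∈ Set.Ioo (0:ℝ) 1,
      |2*(1-x^2)/(2*x*u+(1-x))^2| • ((1 - x*φ u) ^ (2*s-3) / (1 - (φ u)^2) ^ s)
        = (2^(1-2*s)*(1-x^2)^(s-2)*(2*x)) * (u^((2-s)-1)*(1-u)^((1-s)-1))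
          + (2^(1-2*s)*(1-x^2)^(s-2)*(1-x)) * (u^((1-s)-1)*(1-u)^((1-s)-1)) := by
    intro u hu
    obtain ⟨hu0, hu1⟩ := hu
    have hu1' : 0 < 1 - u := by linarith
    have hDu : 0 < 2*x*u + (1-x) := hD u ⟨hu0, hu1⟩
    have e1 : 1 - x*φ u = (1-x^2)/(2*x*u+(1-x)) := by
      rw [hφ]; field_simp; ring
    have e2 : 1 - (φ u)^2 = (4*u*(1-u)*(1-x^2))/(2*x*u+(1-x))^2 := by
      rw [hφ]; field_simp; ring
    rw [e1, e2, smul_eq_mul, abs_of_pos (by positivity), keyalg hA hDu hu0 hu1',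
      show (2-s)-1 = 1 + -s by ring, show (1-s)-1 = -s by ring, Real.rpow_add hu0,
      Real.rpow_one]
    ring
  rw [setIntegral_congr_fun measurableSet_Ioo hpt]
  have hb1 : (0:ℝ) < 2 - s := by linarith
  have hb2 : (0:ℝ) < 1 - s := by linarith
  have i1 : IntegrableOn (fun u : ℝ => u^((2-s)-1)*(1-u)^((1-s)-1)) (Set.Ioo 0 1) :=
    betaIntegrable hb1 hb2
  have i2 : IntegrableOn (fun u : ℝ => u^((1-s)-1)*(1-u)^((1-s)-1)) (Set.Ioo 0 1) :=
    betaIntegrable hb2 hb2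
  rw [MeasureTheory.integral_add (i1.const_mul _) (i2.const_mul _),
    MeasureTheory.integral_const_mul, MeasureTheory.integral_const_mul,
    betaEval hb1 hb2, betaEval hb2 hb2]
  have h2s : (0:ℝ) < 2 - 2*s := by linarith
  have hΓ2 : Gamma (2-2*s) ≠ 0 := (Gamma_pos_of_pos h2s).ne'
  rw [show (2:ℝ)-s = (1-s)+1 by ring, Real.Gamma_add_one hb2.ne',
    show (1:ℝ)-s+1+(1-s) = (2-2*s)+1 by ring, Real.Gamma_add_one h2s.ne',
    show (1:ℝ)-s+(1-s) = 2-2*s by ring]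
  field_simp
  ring
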